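/- Let {S_i}_{i∈I} be a finite, minimally defined collection of affine subspaces of ℝⁿ (no S_i contained in S_j for i ≠ j), and let U = ⋃_{i∈I} S_i. Then the set of smooth points of U is exactly the set of x ∈ ℝⁿ that belong to S_i for exactly one index i ∈ I. -/

import Mathlib

open scoped RealInnerProductSpace
open Matrix
open MeasureTheory

noncomputable section

/-- The normal space to `S` at `x`: the orthogonal complement of the tangent cone. -/
def NormalAt {E : Type*} [NormedAddCommGroup E] [InnerProductSpace ℝ E]
    (S : Set E) (x : E) : Set E :=
  {v | ∀ w ∈ tangentConeAt ℝ S x, ⟪v, w⟫ = 0}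

/-- `x` is a C²-smooth point of `S`: near `x`, `S` is the regular zero set of a C² map. -/
def SmoothPt {E : Type*} [NormedAddCommGroup E] [NormedSpace ℝ E]
    (S : Set E) (x : E) : Prop :=
  x ∈ S ∧ ∃ (U : Set E) (k : ℕ) (f : E → EuclideanSpace ℝ (Fin k)),
    IsOpen U ∧ x ∈ U ∧ ContDiffOn ℝ 2 f U ∧
    (∀ z ∈ U, Function.Surjective (fderivWithin ℝ f U z)) ∧
    S ∩ U = {z ∈ U | f z = 0}

/-- ED critical point of `y` on `S`. -/
def EDCritPt {E : Type*} [NormedAddCommGroup E] [InnerProductSpace ℝ E]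
    (S : Set E) (y x : E) : Prop :=
  SmoothPt S x ∧ (y - x) ∈ NormalAt S x

/-- Metric projection of `y` onto `S`. -/
def projSet {E : Type*} [NormedAddCommGroup E] (S : Set E) (y : E) : Set E :=
  {x ∈ S | dist y x = Metric.infDist y S}

/-- Matrices viewed as Euclidean space (Frobenius norm). -/
def toEuc {n t : ℕ} (X : Matrix (Fin n) (Fin t) ℝ) : EuclideanSpace ℝ (Fin n × Fin t) :=
  WithLp.toLp 2 (fun p : Fin n × Fin t => X p.1 p.2)

/-- Rectangular diagonal matrix. -/
def diagRect {n t : ℕ} (x : Fin n → ℝ) : Matrix (Fin n) (Fin t) ℝ :=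
  fun i j => if (j : ℕ) = (i : ℕ) then x i else 0

/-- Singular values of a rectangular matrix, in non-increasing order. -/
def singvals {n t : ℕ} (X : Matrix (Fin n) (Fin t) ℝ) : EuclideanSpace ℝ (Fin n) :=
  let g : Fin n → ℝ := fun j =>
    Real.sqrt ((Matrix.isHermitian_mul_conjTranspose_self X).eigenvalues j)
  WithLp.toLp 2 (fun i => g (Tuple.sort (fun j => -g j) i))

/-- A vector of signs. -/
def IsSignFn {n : ℕ} (ε : Fin n → ℝ) : Prop := ∀ i, ε i = 1 ∨ ε i = -1

/-- Absolutely symmetric set: invariant under all signed permutations of coordinates. -/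
def AbsSymm {n : ℕ} (S : Set (EuclideanSpace ℝ (Fin n))) : Prop :=
  ∀ (π : Equiv.Perm (Fin n)) (ε : Fin n → ℝ), IsSignFn ε →
    ∀ x : EuclideanSpace ℝ (Fin n), x ∈ S ↔ (WithLp.toLp 2 (fun i => ε i * x (π i)) : EuclideanSpace ℝ (Fin n)) ∈ S

/-- Orthogonally invariant set of matrices. -/
def OrthInv {n t : ℕ} (M : Set (Matrix (Fin n) (Fin t) ℝ)) : Prop :=
  ∀ (U : Matrix (Fin n) (Fin n) ℝ) (V : Matrix (Fin t) (Fin t) ℝ),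
    U * Uᵀ = 1 → V * Vᵀ = 1 → (fun X => U * X * Vᵀ) '' M = M

/-- Projection onto a set of matrices in Frobenius norm. -/
def matProj {n t : ℕ} (A : Set (Matrix (Fin n) (Fin t) ℝ)) (Y : Matrix (Fin n) (Fin t) ℝ) :
    Set (Matrix (Fin n) (Fin t) ℝ) :=
  {X ∈ A | dist (toEuc Y) (toEuc X) = Metric.infDist (toEuc Y) (toEuc '' A)}

/-- ED critical point in matrix space (with Frobenius inner product). -/
def MatEDCritPt {n t : ℕ} (M : Set (Matrix (Fin n) (Fin t) ℝ))
    (Y X : Matrix (Fin n) (Fin t) ℝ) : Prop :=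
  EDCritPt (toEuc '' M) (toEuc Y) (toEuc X)


theorem smooth_of_unique_aux {n : ℕ} {ι : Type} [Fintype ι]
    (S : ι → AffineSubspace ℝ (EuclideanSpace ℝ (Fin n)))
    (x : EuclideanSpace ℝ (Fin n)) (i : ι) (hxi : x ∈ S i)
    (hx : ∀ j, x ∈ S j → j = i) :
    SmoothPt (⋃ i, (S i : Set (EuclideanSpace ℝ (Fin n)))) x := by
  classical
  set Kc := (S i).directionᗮ with hKcdef
  set k := Module.finrank ℝ ↥Kc with hk
  set reprI := (stdOrthonormalBasis ℝ ↥Kc).repr with hrepr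
  set B : EuclideanSpace ℝ (Fin n) →L[ℝ] EuclideanSpace ℝ (Fin k) :=
    (reprI.toContinuousLinearEquiv : ↥Kc ≃L[ℝ] EuclideanSpace ℝ (Fin k)).toContinuousLinearMap.comp
      (Submodule.orthogonalProjectionOnto Kc) with hB
  set f : EuclideanSpace ℝ (Fin n) → EuclideanSpace ℝ (Fin k) := fun z => B (z - x) with hf
  set W : Set (EuclideanSpace ℝ (Fin n)) := (⋃ j ∈ {j | j ≠ i}, (S j : Set _))ᶜ with hW
  have hWopen : IsOpen W := by
    rw [hW]
    refine (Set.Finite.isClosed_biUnion (Set.toFinite _) ?_).isOpen_compl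
    intro j _; exact (S j).closed_of_finiteDimensional
  have hxW : x ∈ W := by
    rw [hW]
    simp only [Set.mem_compl_iff, Set.mem_iUnion]
    rintro ⟨j, hj, hxj⟩
    exact hj (hx j hxj)
  have hfd : ∀ z : EuclideanSpace ℝ (Fin n), HasFDerivAt f B z := by
    intro z
    refine HasFDerivAt.congr_fderiv (B.hasFDerivAt.comp z ((hasFDerivAt_id z).sub_const x)) ?_
    simp
  refine ⟨Set.mem_iUnion.2 ⟨i, hxi⟩, W, k, f, hWopen, hxW, ?_, ?_, ?_⟩
  · exact (B.contDiff.comp (contDiff_id.sub contDiff_const)).contDiffOn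
  · intro z hz
    rw [(hfd z).hasFDerivWithinAt.fderivWithin (hWopen.uniqueDiffWithinAt hz)]
    intro w
    refine ⟨((reprI.symm w : ↥Kc) : EuclideanSpace ℝ (Fin n)), ?_⟩
    show (reprI.toContinuousLinearEquiv)
      ((Submodule.orthogonalProjectionOnto Kc) ((reprI.symm w : ↥Kc) : EuclideanSpace ℝ (Fin n))) = w
    rw [Submodule.orthogonalProjectionOnto_mem_subspace_eq_self]
    exact reprI.apply_symm_apply w
  · ext z
    simp only [Set.mem_inter_iff, Set.mem_iUnion, Set.mem_setOf_eq]
    constructor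
    · rintro ⟨⟨j, hzj⟩, hzW⟩
      have hji : j = i := by
        by_contra hne
        exact hzW (Set.mem_biUnion hne hzj)
      subst hji
      refine ⟨hzW, ?_⟩
      have hmem : z - x ∈ Kcᗮ := by
        rw [hKcdef]
        exact (S j).direction.le_orthogonal_orthogonal
          (by simpa using AffineSubspace.vsub_mem_direction hzj hxi)
      have h0 : Submodule.orthogonalProjectionOnto Kc (z - x) = 0 := Submodule.orthogonalProjectionOnto_eq_zero_iff.2 hmem
      show (reprI.toContinuousLinearEquiv) ((Submodule.orthogonalProjectionOnto Kc) (z - x)) = 0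
      rw [h0]; exact map_zero _
    · rintro ⟨hzW, hfz⟩
      have h1 : reprI ((Submodule.orthogonalProjectionOnto Kc) (z - x)) = 0 := hfz
      have h0 : Submodule.orthogonalProjectionOnto Kc (z - x) = 0 := by
        apply reprI.injective
        rw [h1, map_zero]
      have hmem : z - x ∈ (S i).direction := by
        have := Submodule.orthogonalProjectionOnto_eq_zero_iff.1 h0
        rwa [hKcdef, Submodule.orthogonal_orthogonal] at this
      have hzi : z ∈ S i := by
        have := AffineSubspace.vadd_mem_of_mem_direction hmem hxi
        rwa [vadd_eq_add, sub_add_cancel] at this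
      exact ⟨⟨i, hzi⟩, hzW⟩

set_option maxHeartbeats 2000000 in
theorem unique_of_smooth_aux {n : ℕ} {ι : Type} [Fintype ι]
    (S : ι → AffineSubspace ℝ (EuclideanSpace ℝ (Fin n)))
    (hmin : ∀ i j, i ≠ j →
      ¬ ((S i : Set (EuclideanSpace ℝ (Fin n))) ⊆ (S j : Set (EuclideanSpace ℝ (Fin n)))))
    (x : EuclideanSpace ℝ (Fin n))
    (h : SmoothPt (⋃ i, (S i : Set (EuclideanSpace ℝ (Fin n)))) x) :
    ∃! i, x ∈ S i := by
  classical
  obtain ⟨hxU, V, k, f, hV, hxV, hf, hsurj, hset⟩ := h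
  set L : EuclideanSpace ℝ (Fin n) →L[ℝ] EuclideanSpace ℝ (Fin k) := fderiv ℝ f x with hL
  have hfC : ContDiffAt ℝ 2 f x := hf.contDiffAt (hV.mem_nhds hxV)
  have hfd : HasFDerivAt f L x := (hfC.differentiableAt (by norm_num)).hasFDerivAt
  have hLsurj : Function.Surjective L := by
    have := hsurj x hxV
    rwa [fderivWithin_of_isOpen hV hxV] at this
  have hfx : f x = 0 := by
    have : x ∈ {z ∈ V | f z = 0} := by rw [← hset]; exact ⟨hxU, hxV⟩
    exact this.2
  set K : Submodule ℝ (EuclideanSpace ℝ (Fin n)) := LinearMap.ker (L : EuclideanSpace ℝ (Fin n) →ₗ[ℝ] EuclideanSpace ℝ (Fin k)) with hK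
  -- sublemma A : directions of members through x lie in ker L
  have hdirK : ∀ m : ι, x ∈ S m → (S m).direction ≤ K := by
    intro m hxm v hv
    have hc : HasDerivAt (fun t : ℝ => x + t • v) v 0 := by
      simpa using ((hasDerivAt_id (0 : ℝ)).smul_const v).const_add x
    have hmem : ∀ t : ℝ, x + t • v ∈ S m := by
      intro t
      have := AffineSubspace.vadd_mem_of_mem_direction ((S m).direction.smul_mem t hv) hxm
      rwa [vadd_eq_add, add_comm] at this
    have hevV : ∀ᶠ t : ℝ in nhds 0, x + t • v ∈ V := by
      have ht : Filter.Tendsto (fun t : ℝ => x + t • v) (nhds 0) (nhds x) := by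
        have := hc.continuousAt
        rwa [ContinuousAt, show x + (0:ℝ) • v = x by simp] at this
      exact ht (hV.mem_nhds hxV)
    have hev0 : (fun t : ℝ => f (x + t • v)) =ᶠ[nhds 0]
        (fun _ => (0 : EuclideanSpace ℝ (Fin k))) := by
      filter_upwards [hevV] with t htV
      have hmem2 : x + t • v ∈ (⋃ i, (S i : Set (EuclideanSpace ℝ (Fin n)))) ∩ V :=
        ⟨Set.mem_iUnion.2 ⟨m, hmem t⟩, htV⟩
      rw [hset] at hmem2
      exact hmem2.2
    have hd1 : HasDerivAt (fun t : ℝ => f (x + t • v)) (L v) 0 := by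
      have hfd0 : HasFDerivAt f L (x + (0 : ℝ) • v) := by
        rw [show x + (0:ℝ) • v = x by simp]; exact hfd
      exact hfd0.comp_hasDerivAt 0 hc
    have hd2 : HasDerivAt (fun t : ℝ => f (x + t • v)) 0 0 :=
      (hasDerivAt_const (0:ℝ) (0 : EuclideanSpace ℝ (Fin k))).congr_of_eventuallyEq hev0
    exact LinearMap.mem_ker.2 (hd1.unique hd2)
  -- subset lemma for affine subspaces sharing x
  have hsub2 : ∀ a b : ι, x ∈ S a → x ∈ S b → (S a).direction ≤ (S b).direction →
      (S a : Set (EuclideanSpace ℝ (Fin n))) ⊆ (S b : Set (EuclideanSpace ℝ (Fin n))) := by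
    intro a b hxa hxb hab z hz
    have h1 : z - x ∈ (S a).direction := by
      simpa using AffineSubspace.vsub_mem_direction hz hxa
    have := AffineSubspace.vadd_mem_of_mem_direction (hab h1) hxb
    rwa [vadd_eq_add, sub_add_cancel] at this
  -- main claim: exists m with x ∈ S m and K ≤ direction (S m)
  have hmain : ∃ m : ι, x ∈ S m ∧ K ≤ (S m).direction := by
    haveI : CompleteSpace ↥K := FiniteDimensional.complete ℝ ↥K
    set η : EuclideanSpace ℝ (Fin n) →L[ℝ] ↥K := Submodule.orthogonalProjectionOnto K with hη
    set T : EuclideanSpace ℝ (Fin n) →L[ℝ] EuclideanSpace ℝ (Fin k) × ↥K := L.prod η with hT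
    have hT0 : ∀ z, T z = 0 → z = 0 := by
      intro z hz
      have h1 : L z = 0 := congrArg Prod.fst hz
      have h2 : η z = 0 := congrArg Prod.snd hz
      have hzK : z ∈ K := LinearMap.mem_ker.2 h1
      have h3 : η z = ⟨z, hzK⟩ := Submodule.orthogonalProjectionOnto_mem_subspace_eq_self (⟨z, hzK⟩ : ↥K)
      have h4 : (⟨z, hzK⟩ : ↥K) = 0 := by rw [← h3, h2]
      exact congrArg Subtype.val h4
    have hTinj : Function.Injective T := by
      intro a b hab
      have h5 : T (a - b) = 0 := by rw [map_sub, hab, sub_self]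
      exact sub_eq_zero.1 (hT0 _ h5)
    have hrank : Module.finrank ℝ (EuclideanSpace ℝ (Fin n))
        = Module.finrank ℝ (EuclideanSpace ℝ (Fin k) × ↥K) := by
      have h1 := LinearMap.finrank_range_add_finrank_ker
        (L : EuclideanSpace ℝ (Fin n) →ₗ[ℝ] EuclideanSpace ℝ (Fin k))
      have h2 : LinearMap.range (L : EuclideanSpace ℝ (Fin n) →ₗ[ℝ] EuclideanSpace ℝ (Fin k))
          = ⊤ := LinearMap.range_eq_top.2 hLsurj
      rw [h2, finrank_top, finrank_euclideanSpace_fin, finrank_euclideanSpace_fin] at h1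
      rw [Module.finrank_prod, finrank_euclideanSpace_fin, finrank_euclideanSpace_fin]
      have h3 : LinearMap.ker (L : EuclideanSpace ℝ (Fin n) →ₗ[ℝ] EuclideanSpace ℝ (Fin k))
          = K := rfl
      rw [h3] at h1
      omega
    set eqv : EuclideanSpace ℝ (Fin n) ≃L[ℝ] EuclideanSpace ℝ (Fin k) × ↥K :=
      LinearEquiv.toContinuousLinearEquiv
        (LinearEquiv.ofBijective (T : EuclideanSpace ℝ (Fin n) →ₗ[ℝ] _)
          ⟨hTinj, (LinearMap.injective_iff_surjective_of_finrank_eq_finrank hrank).1 hTinj⟩)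
      with heqv
    have hcoe : (eqv : EuclideanSpace ℝ (Fin n) →L[ℝ] EuclideanSpace ℝ (Fin k) × ↥K) = T :=
      ContinuousLinearMap.ext fun z => rfl
    set Fm : EuclideanSpace ℝ (Fin n) → EuclideanSpace ℝ (Fin k) × ↥K :=
      fun z => (f z, η (z - x)) with hFm
    have hηd : ∀ z, HasFDerivAt (fun w => η (w - x)) η z := by
      intro z
      have h := η.hasFDerivAt.comp z ((hasFDerivAt_id z).sub_const x)
      rwa [ContinuousLinearMap.comp_id] at h
    have hFd : HasFDerivAt Fm T x := HasFDerivAt.prodMk hfd (hηd x)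
    have hFc : ContDiffAt ℝ 2 Fm x :=
      ContDiffAt.prodMk hfC ((η.contDiff.comp (contDiff_id.sub contDiff_const)).contDiffAt)
    have hFd' : HasFDerivAt Fm
        (eqv : EuclideanSpace ℝ (Fin n) →L[ℝ] EuclideanSpace ℝ (Fin k) × ↥K) x := by
      rw [hcoe]; exact hFd
    have hn2 : (1 : WithTop ℕ∞) ≤ 2 := by norm_num
    set G := hFc.localInverse hFd' (by norm_num) with hG
    have hGc : ContDiffAt ℝ 2 G (Fm x) := hFc.to_localInverse hFd' (by norm_num)
    have hGx : G (Fm x) = x := hFc.localInverse_apply_image hFd' (by norm_num)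
    have hrinv : ∀ᶠ p in nhds (Fm x), Fm (G p) = p :=
      (hFc.hasStrictFDerivAt' hFd' (by norm_num)).eventually_right_inverse
    have hFx : Fm x = (0, 0) := by
      rw [hFm]; simp [hfx]
    set φ : ↥K → EuclideanSpace ℝ (Fin n) := fun y => G (0, y) with hφ
    have hφc : ContDiffAt ℝ 2 φ 0 := by
      have h1 : ContDiffAt ℝ 2 G ((0 : EuclideanSpace ℝ (Fin k)), (0 : ↥K)) := by
        rw [← hFx]; exact hGc
      exact h1.comp 0 (contDiff_const.prodMk contDiff_id).contDiffAt
    have hφ0 : φ 0 = x := by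
      have := hGx; rw [hFx] at this; exact this
    have hev1 : ∀ᶠ y : ↥K in nhds 0, Fm (φ y) = ((0 : EuclideanSpace ℝ (Fin k)), y) := by
      have ht : Filter.Tendsto (fun y : ↥K => ((0 : EuclideanSpace ℝ (Fin k)), y))
          (nhds 0) (nhds (Fm x)) := by
        rw [hFx]; exact (continuous_const.prodMk continuous_id).tendsto 0
      exact ht.eventually hrinv
    -- the bad set to avoid
    set Wc : Set (EuclideanSpace ℝ (Fin n)) := (⋃ m ∈ {m : ι | x ∉ S m}, (S m : Set _))ᶜ
      with hWc
    have hWcopen : IsOpen Wc := by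
      rw [hWc]
      refine (Set.Finite.isClosed_biUnion (Set.toFinite _) ?_).isOpen_compl
      intro m _; exact (S m).closed_of_finiteDimensional
    have hxWc : x ∈ Wc := by
      rw [hWc]
      simp only [Set.mem_compl_iff, Set.mem_iUnion]
      rintro ⟨m, hm, hxm⟩
      exact hm hxm
    have hev2 : ∀ᶠ y : ↥K in nhds 0, φ y ∈ V ∩ Wc := by
      have hc := hφc.continuousAt
      rw [ContinuousAt, hφ0] at hc
      exact hc ((hV.inter hWcopen).mem_nhds ⟨hxV, hxWc⟩)
    obtain ⟨u, hu, hφu⟩ := hφc.contDiffOn hn2 (by norm_num)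
    have hcomb : (u ∩ ({y : ↥K | Fm (φ y) = ((0 : EuclideanSpace ℝ (Fin k)), y)}
        ∩ {y : ↥K | φ y ∈ V ∩ Wc})) ∈ nhds (0 : ↥K) :=
      Filter.inter_mem hu (Filter.inter_mem hev1 hev2)
    obtain ⟨δ, hδpos, hδ⟩ := Metric.mem_nhds_iff.1 hcomb
    have hδ' : (0:ℝ) < δ/2 := by linarith
    have hsubball : Metric.closedBall (0 : ↥K) (δ/2) ⊆ Metric.ball 0 δ :=
      Metric.closedBall_subset_ball (by linarith)
    have hballu : Metric.ball (0 : ↥K) δ ⊆ u := fun y hy => (hδ hy).1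
    have hφdiff : ∀ y ∈ Metric.ball (0 : ↥K) δ, DifferentiableAt ℝ φ y := by
      intro y hy
      exact ((hφu.mono hballu).differentiableOn one_ne_zero).differentiableAt
        (Metric.isOpen_ball.mem_nhds hy)
    have hφS : ∀ y ∈ Metric.ball (0 : ↥K) δ, ∃ m, x ∈ S m ∧ φ y ∈ S m := by
      intro y hy
      have h1 := hδ hy
      have hfz : f (φ y) = 0 := congrArg Prod.fst h1.2.1
      have hV' : φ y ∈ V := h1.2.2.1
      have hU' : φ y ∈ (⋃ i, (S i : Set (EuclideanSpace ℝ (Fin n)))) := by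
        have : φ y ∈ {z ∈ V | f z = 0} := ⟨hV', hfz⟩
        rw [← hset] at this
        exact this.1
      obtain ⟨m, hm⟩ := Set.mem_iUnion.1 hU'
      refine ⟨m, ?_, hm⟩
      by_contra hxm
      exact h1.2.2.2 (Set.mem_biUnion hxm hm)
    -- Baire category argument
    set g : Option ι → Set ↥K := fun o =>
      Option.rec ((Metric.ball (0 : ↥K) (δ/2))ᶜ)
        (fun m => if x ∈ S m then Metric.closedBall (0:↥K) (δ/2) ∩ φ ⁻¹' (S m : Set _) else ∅) o
      with hg
    have hφcont : ContinuousOn φ (Metric.closedBall (0 : ↥K) (δ/2)) :=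
      ((hφu.mono (hsubball.trans hballu)).continuousOn)
    have hgclosed : ∀ o, IsClosed (g o) := by
      rintro (_ | m)
      · exact Metric.isOpen_ball.isClosed_compl
      · show IsClosed (if x ∈ S m then _ else _)
        split_ifs with hxm
        · exact hφcont.preimage_isClosed_of_isClosed Metric.isClosed_closedBall
            (S m).closed_of_finiteDimensional
        · exact isClosed_empty
    have hgcover : ⋃ o, g o = Set.univ := by
      ext y
      simp only [Set.mem_iUnion, Set.mem_univ, iff_true]
      by_cases hy : y ∈ Metric.ball (0 : ↥K) (δ/2)
      · obtain ⟨m, hxm, hym⟩ := hφS y (Metric.ball_subset_ball (by linarith) hy)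
        refine ⟨some m, ?_⟩
        show y ∈ (if x ∈ S m then _ else _)
        rw [if_pos hxm]
        exact ⟨Metric.ball_subset_closedBall hy, hym⟩
      · exact ⟨none, hy⟩
    have hdense := dense_iUnion_interior_of_closed hgclosed hgcover
    obtain ⟨y0, hy0i, hy0b⟩ := hdense.exists_mem_open Metric.isOpen_ball
      ⟨0, Metric.mem_ball_self hδ'⟩
    obtain ⟨o, ho⟩ := Set.mem_iUnion.1 hy0i
    obtain _ | m := o
    · exact absurd hy0b (interior_subset ho)
    · have hxm : x ∈ S m := by
        by_contra hxm
        have : g (some m) = ∅ := by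
          show (if x ∈ S m then _ else _) = ∅
          rw [if_neg hxm]
        rw [this] at ho
        simp at ho
      have ho' : y0 ∈ interior (Metric.closedBall (0:↥K) (δ/2) ∩ φ ⁻¹' (S m : Set _)) := by
        have : g (some m) = Metric.closedBall (0:↥K) (δ/2) ∩ φ ⁻¹' (S m : Set _) := by
          show (if x ∈ S m then _ else _) = _
          rw [if_pos hxm]
        rwa [this] at ho
      obtain ⟨ε, hεpos, hεsub⟩ := Metric.mem_nhds_iff.1 (mem_interior_iff_mem_nhds.1 ho')
      have hy0δ : y0 ∈ Metric.ball (0 : ↥K) δ := Metric.ball_subset_ball (by linarith) hy0b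
      have hdy0 : DifferentiableAt ℝ φ y0 := hφdiff y0 hy0δ
      set φ' := fderiv ℝ φ y0 with hφ'
      -- (a) η ∘ φ' = id
      have hid : η.comp φ' = ContinuousLinearMap.id ℝ ↥K := by
        have h1 : HasFDerivAt (fun y : ↥K => η (φ y - x)) (η.comp φ') y0 :=
          (hηd (φ y0)).comp y0 hdy0.hasFDerivAt
        have h2 : (fun y : ↥K => η (φ y - x)) =ᶠ[nhds y0] id := by
          filter_upwards [Metric.isOpen_ball.mem_nhds hy0δ] with y hy
          exact congrArg Prod.snd ((hδ hy).2.1)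
        have h3 : HasFDerivAt (id : ↥K → ↥K) (η.comp φ') y0 :=
          h1.congr_of_eventuallyEq h2.symm
        exact h3.unique (hasFDerivAt_id y0)
      -- (b) range of φ' lies in direction of S m
      have hrange : ∀ v : ↥K, φ' v ∈ (S m).direction := by
        intro v
        have hc : HasDerivAt (fun t : ℝ => y0 + t • v) v 0 := by
          simpa using ((hasDerivAt_id (0 : ℝ)).smul_const v).const_add y0
        have hcomp : HasDerivAt (φ ∘ fun t : ℝ => y0 + t • v) (φ' v) 0 := by
          have hfd0 : HasFDerivAt φ φ' (y0 + (0 : ℝ) • v) := by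
            rw [show y0 + (0:ℝ) • v = y0 by simp]
            exact hdy0.hasFDerivAt
          exact hfd0.comp_hasDerivAt 0 hc
        have hslope := hasDerivAt_iff_tendsto_slope.1 hcomp
        refine IsClosed.mem_of_tendsto (S m).direction.closed_of_finiteDimensional hslope ?_
        have hevb : ∀ᶠ t : ℝ in nhdsWithin 0 {0}ᶜ, y0 + t • v ∈ Metric.ball y0 ε := by
          apply eventually_nhdsWithin_of_eventually_nhds
          have ht : Filter.Tendsto (fun t : ℝ => y0 + t • v) (nhds 0) (nhds y0) := by
            have := hc.continuousAt
            rwa [ContinuousAt, show y0 + (0:ℝ) • v = y0 by simp] at this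
          exact ht (Metric.isOpen_ball.mem_nhds (Metric.mem_ball_self hεpos))
        filter_upwards [hevb] with t ht
        have h1 : φ (y0 + t • v) ∈ (S m : Set _) := (hεsub ht).2
        have h2 : φ y0 ∈ (S m : Set _) := (hεsub (Metric.mem_ball_self hεpos)).2
        have h3 : φ (y0 + t • v) - φ y0 ∈ (S m).direction := by
          simpa using AffineSubspace.vsub_mem_direction h1 h2
        have h4 : slope (φ ∘ fun t : ℝ => y0 + t • v) 0 t
            = (t - 0)⁻¹ • (φ (y0 + t • v) - φ y0) := by
          rw [slope_def_module]
          simp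
        rw [h4]
        exact (S m).direction.smul_mem _ h3
      -- conclude K ≤ direction
      refine ⟨m, hxm, ?_⟩
      intro v hv
      have h1 : φ' ⟨v, hv⟩ ∈ (S m).direction := hrange ⟨v, hv⟩
      have h2 : φ' ⟨v, hv⟩ ∈ K := hdirK m hxm h1
      have h3 : η (φ' ⟨v, hv⟩) = ⟨φ' ⟨v, hv⟩, h2⟩ :=
        Submodule.orthogonalProjectionOnto_mem_subspace_eq_self (⟨φ' ⟨v, hv⟩, h2⟩ : ↥K)
      have h4 : η (φ' ⟨v, hv⟩) = ⟨v, hv⟩ := by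
        have := congrArg (fun A : ↥K →L[ℝ] ↥K => A ⟨v, hv⟩) hid
        simpa using this
      have h5 : φ' ⟨v, hv⟩ = v := by
        have h6 : (⟨φ' ⟨v, hv⟩, h2⟩ : ↥K) = ⟨v, hv⟩ := by rw [← h3, h4]
        exact congrArg Subtype.val h6
      rw [← h5]
      exact h1
  -- finish
  obtain ⟨m, hxm, hKle⟩ := hmain
  obtain ⟨i, hxi⟩ := Set.mem_iUnion.1 hxU
  refine ⟨i, hxi, ?_⟩
  intro j hxj
  by_contra hne
  by_cases hmi : m = i
  · subst hmi
    exact hmin j m hne (hsub2 j m hxj hxm ((hdirK j hxj).trans hKle))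
  · exact hmin i m (fun hh => hmi hh.symm) (hsub2 i m hxi hxm ((hdirK i hxi).trans hKle))

/-- for a finite minimally defined collection of (nonempty) affine subspaces,
the smooth points of the union are exactly the points lying in exactly one member. -/
theorem smooth_points_of_affine_complex {n : ℕ} {ι : Type} [Fintype ι]
    (S : ι → AffineSubspace ℝ (EuclideanSpace ℝ (Fin n)))
    (hne : ∀ i, (S i : Set (EuclideanSpace ℝ (Fin n))).Nonempty)
    (hmin : ∀ i j, i ≠ j →
      ¬ ((S i : Set (EuclideanSpace ℝ (Fin n))) ⊆ (S j : Set (EuclideanSpace ℝ (Fin n))))) :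
    {x | SmoothPt (⋃ i, (S i : Set (EuclideanSpace ℝ (Fin n)))) x}
      = {x | ∃! i, x ∈ S i} := by
  ext x
  simp only [Set.mem_setOf_eq]
  constructor
  · exact fun h => unique_of_smooth_aux S hmin x h
  · rintro ⟨i, hxi, huniq⟩
    exact smooth_of_unique_aux S x i hxi (fun j hj => huniq j hj)
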